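/- Let X and Y be bounded linear operators on a Banach space E such that e^{αX} and e^{α(X+tY)} are contractions for all α ≥ 0 and t ∈ [0,1] (e.g. X and Y dissipative). Then ‖e^{X+Y} − e^{X}‖ ≤ ‖Y‖. -/

import Mathlib

open NormedSpace

/-- **Perturbations of the operator exponential.**
If `X` and `Y` are bounded operators on a Banach space `E` such that `e^{αX}` and
`e^{α(X + tY)}` are contractions for all `α ≥ 0` and `t ∈ [0,1]` (e.g. `X`, `Y` dissipative),
then `‖e^{X+Y} − e^{X}‖ ≤ ‖Y‖`. -/
theorem bch_exp_perturbation {E : Type*} [NormedAddCommGroup E] [NormedSpace ℝ E]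
    [CompleteSpace E] (X Y : E →L[ℝ] E)
    (hX : ∀ α : ℝ, 0 ≤ α → ‖exp (α • X)‖ ≤ 1)
    (hXY : ∀ α t : ℝ, 0 ≤ α → t ∈ Set.Icc (0 : ℝ) 1 → ‖exp (α • (X + t • Y))‖ ≤ 1) :
    ‖exp (X + Y) - exp X‖ ≤ ‖Y‖ := by
  set A : E →L[ℝ] E := X + Y with hA
  -- g s = exp(s•A) * exp((1-s)•X)
  set g : ℝ → E →L[ℝ] E := fun s => exp (s • A) * exp ((1 - s) • X) with hg
  set g' : ℝ → E →L[ℝ] E := fun s => exp (s • A) * Y * exp ((1 - s) • X) with hg'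
  have hderiv : ∀ s : ℝ, HasDerivAt g (g' s) s := by
    intro s
    have h1 : HasDerivAt (fun u : ℝ => exp (u • A)) (exp (s • A) * A) s :=
      hasDerivAt_exp_smul_const A s
    have h2 : HasDerivAt (fun u : ℝ => exp (u • X)) (X * exp ((1 - s) • X)) (1 - s) :=
      hasDerivAt_exp_smul_const' X (1 - s)
    have h0 : HasDerivAt (fun u : ℝ => 1 - u) (-1 : ℝ) s := by
      simpa using (hasDerivAt_id s).const_sub (1:ℝ)
    have h3 : HasDerivAt (fun u : ℝ => exp ((1 - u) • X))
        (-(X * exp ((1 - s) • X))) s := by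
      have := HasDerivAt.scomp s (by simpa using h2) h0
      simpa [Function.comp_def] using this
    have := h1.mul h3
    refine this.congr_deriv ?_
    simp only [hg', hA]
    noncomm_ring
  have hbound : ∀ s ∈ Set.Icc (0:ℝ) 1, ‖g' s‖ ≤ ‖Y‖ := by
    intro s hs
    have hA1 : ‖exp (s • A)‖ ≤ 1 := by
      have := hXY s 1 hs.1 ⟨zero_le_one, le_refl 1⟩
      simpa [hA] using this
    have hX1 : ‖exp ((1 - s) • X)‖ ≤ 1 := hX (1 - s) (by linarith [hs.2])
    calc ‖exp (s • A) * Y * exp ((1 - s) • X)‖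
        ≤ ‖exp (s • A) * Y‖ * ‖exp ((1 - s) • X)‖ := norm_mul_le _ _
      _ ≤ ‖exp (s • A)‖ * ‖Y‖ * ‖exp ((1 - s) • X)‖ := by
          gcongr; exact norm_mul_le _ _
      _ ≤ 1 * ‖Y‖ * 1 := by
          have h0 : (0:ℝ) ≤ ‖Y‖ := norm_nonneg _
          exact mul_le_mul (mul_le_mul hA1 le_rfl h0 zero_le_one) hX1 (norm_nonneg _)
            (by positivity)
      _ = ‖Y‖ := by ring
  have hmvt := Convex.norm_image_sub_le_of_norm_hasDerivWithin_le
    (f := g) (f' := g') (s := Set.Icc (0:ℝ) 1) (C := ‖Y‖)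
    (fun x hx => (hderiv x).hasDerivWithinAt) hbound (convex_Icc 0 1)
    (Set.left_mem_Icc.2 zero_le_one) (Set.right_mem_Icc.2 zero_le_one)
  have hg1 : g 1 = exp A := by simp [hg]
  have hg0 : g 0 = exp X := by simp [hg]
  rw [hg1, hg0] at hmvt
  simpa using hmvt
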